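/- If K is a C¹ solution on [0,T] of the Riccati terminal value problem K'(t) = 2βK(t) + γ_N K(t)² − λ with K(T) = c, then for every t ∈ [0,T] one has K'(t) = (2βc + γ_N c² − λ) · exp(−∫_t^T 2(β + γ_N K(s)) ds). Consequently K' has constant sign on [0,T] (the sign of 2βc + γ_N c² − λ), K is monotone on [0,T], and max_{[0,T]} K = max{c, K(0)} and min_{[0,T]} K = min{c, K(0)}. -/

import Mathlib

open Set

/-- For any C¹ solution `K` of the Riccati terminal value problem,
`K'(t) = (2βc + γ_N c² − λ)·exp(−∫_t^T 2(β + γ_N K(s)) ds)`; consequently `K'` has the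
constant sign of `2βc + γ_N c² − λ`, `K` is monotone on `[0,T]`, and
`max_{[0,T]} K = max {c, K 0}`, `min_{[0,T]} K = min {c, K 0}`. -/
theorem riccati_derivative_formula_and_monotonicity
    (N : ℕ) (hN : 2 ≤ N) (T a q ε c : ℝ)
    (hT : 0 < T) (ha : 0 ≤ a) (hq : 0 ≤ q) (hc : 0 ≤ c) (hqε : q ^ 2 ≤ ε)
    (β γN lam : ℝ)
    (hβ : β = a + (1 - 1 / (N : ℝ)) * q)
    (hγ : γN = (1 - 1 / (N : ℝ)) ^ 2)
    (hlam : lam = ε - q ^ 2)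
    (K K' : ℝ → ℝ)
    (hK : ∀ t ∈ Icc (0 : ℝ) T, HasDerivAt K (K' t) t)
    (hK' : ∀ t ∈ Icc (0 : ℝ) T, K' t = 2 * β * K t + γN * K t ^ 2 - lam)
    (hKT : K T = c) :
    (∀ t ∈ Icc (0 : ℝ) T,
      K' t = (2 * β * c + γN * c ^ 2 - lam) *
        Real.exp (-(∫ s in t..T, 2 * (β + γN * K s)))) ∧
    (0 ≤ 2 * β * c + γN * c ^ 2 - lam →
      (∀ t ∈ Icc (0 : ℝ) T, 0 ≤ K' t) ∧ MonotoneOn K (Icc (0 : ℝ) T)) ∧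
    (2 * β * c + γN * c ^ 2 - lam ≤ 0 →
      (∀ t ∈ Icc (0 : ℝ) T, K' t ≤ 0) ∧ AntitoneOn K (Icc (0 : ℝ) T)) ∧
    IsGreatest (K '' Icc (0 : ℝ) T) (max c (K 0)) ∧
    IsLeast (K '' Icc (0 : ℝ) T) (min c (K 0)) := by
  have hT0 : (0 : ℝ) ≤ T := hT.le
  have h0mem : (0 : ℝ) ∈ Icc (0 : ℝ) T := ⟨le_refl 0, hT0⟩
  have hTmem : T ∈ Icc (0 : ℝ) T := ⟨hT0, le_refl T⟩
  -- clamp map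
  set φ : ℝ → ℝ := fun t => max 0 (min t T) with hφdef
  have hφmem : ∀ x, φ x ∈ Icc (0 : ℝ) T := by
    intro x
    constructor
    · exact le_max_left _ _
    · exact max_le hT0 (min_le_right _ _)
  have hφeq : ∀ x ∈ Icc (0 : ℝ) T, φ x = x := by
    intro x hx
    simp only [hφdef]
    rw [min_eq_left hx.2, max_eq_right hx.1]
  have hφcont : Continuous φ := continuous_const.max (continuous_id.min continuous_const)
  -- continuity of K on Icc
  have hKcont : ContinuousOn K (Icc (0 : ℝ) T) := fun x hx =>
    (hK x hx).continuousAt.continuousWithinAt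
  -- globally continuous modification of K
  set Kc : ℝ → ℝ := fun t => K (φ t) with hKcdef
  have hKccont : Continuous Kc := hKcont.comp_continuous hφcont hφmem
  have hKceq : ∀ x ∈ Icc (0 : ℝ) T, Kc x = K x := fun x hx => by
    simp only [hKcdef, hφeq x hx]
  set g : ℝ → ℝ := fun t => 2 * (β + γN * Kc t) with hgdef
  have hgcont : Continuous g := by
    apply Continuous.mul continuous_const
    exact continuous_const.add (continuous_const.mul hKccont)
  set G : ℝ → ℝ := fun t => ∫ s in (0:ℝ)..t, g s with hGdef
  have hG : ∀ t : ℝ, HasDerivAt G (g t) t := by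
    intro t
    exact intervalIntegral.integral_hasDerivAt_right
      (hgcont.intervalIntegrable _ _)
      hgcont.stronglyMeasurable.stronglyMeasurableAtFilter
      hgcont.continuousAt
  -- the auxiliary function H
  set f : ℝ → ℝ := fun t => 2 * β * K t + γN * K t ^ 2 - lam with hfdef
  set H : ℝ → ℝ := fun t => f t * Real.exp (-(G t)) with hHdef
  have hHderiv : ∀ t ∈ Icc (0 : ℝ) T, HasDerivAt H 0 t := by
    intro t ht
    have hKt := hK t ht
    have hf : HasDerivAt f (2 * β * K' t + γN * (2 * K t * K' t)) t := by
      have h1 : HasDerivAt (fun s => 2 * β * K s) (2 * β * K' t) t := hKt.const_mul _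
      have h2 : HasDerivAt (fun s => γN * K s ^ 2) (γN * (2 * K t * K' t)) t := by
        have := (hKt.pow 2).const_mul γN
        simpa [mul_comm, mul_assoc, mul_left_comm] using this
      exact (h1.add h2).sub_const lam
    have hE : HasDerivAt (fun s => Real.exp (-(G s))) (Real.exp (-(G t)) * (-(g t))) t :=
      ((hG t).neg).exp
    have := hf.mul hE
    have hzero : (2 * β * K' t + γN * (2 * K t * K' t)) * Real.exp (-(G t)) +
        f t * (Real.exp (-(G t)) * (-(g t))) = 0 := by
      rw [hK' t ht]
      simp only [hgdef, hKceq t ht, hfdef]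
      ring
    rw [hzero] at this
    exact this
  have hHcont : ContinuousOn H (Icc (0 : ℝ) T) := fun x hx =>
    (hHderiv x hx).continuousAt.continuousWithinAt
  have hHconst : ∀ x ∈ Icc (0 : ℝ) T, H x = H 0 :=
    constant_of_has_deriv_right_zero hHcont
      (fun x hx => ((hHderiv x (Ico_subset_Icc_self hx)).hasDerivWithinAt))
  -- D
  set D : ℝ := 2 * β * c + γN * c ^ 2 - lam with hDdef
  have hfT : f T = D := by simp [hfdef, hDdef, hKT]
  -- main formula
  have hmain : ∀ t ∈ Icc (0 : ℝ) T,
      K' t = D * Real.exp (-(∫ s in t..T, 2 * (β + γN * K s))) := by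
    intro t ht
    have heq : f t * Real.exp (-(G t)) = f T * Real.exp (-(G T)) := by
      have h1 := hHconst t ht
      have h2 := hHconst T hTmem
      simp only [hHdef] at h1 h2
      rw [h1, h2]
    have hft : f t = f T * Real.exp (-(G T - G t)) := by
      calc f t = f t * Real.exp (-(G t)) * Real.exp (G t) := by
            rw [mul_assoc, ← Real.exp_add]; simp
        _ = f T * Real.exp (-(G T)) * Real.exp (G t) := by rw [heq]
        _ = f T * Real.exp (-(G T - G t)) := by
            rw [mul_assoc, ← Real.exp_add]; ring_nf
    -- G T - G t = ∫ t..T g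
    have hadd : (∫ s in (0:ℝ)..t, g s) + (∫ s in t..T, g s) = ∫ s in (0:ℝ)..T, g s :=
      intervalIntegral.integral_add_adjacent_intervals
        (hgcont.intervalIntegrable _ _) (hgcont.intervalIntegrable _ _)
    have hGsub : G T - G t = ∫ s in t..T, g s := by
      simp only [hGdef]; linarith [hadd]
    have hint : (∫ s in t..T, g s) = ∫ s in t..T, 2 * (β + γN * K s) := by
      apply intervalIntegral.integral_congr
      intro s hs
      have hs' : s ∈ Icc (0 : ℝ) T := by
        rw [uIcc_of_le ht.2] at hs
        exact ⟨le_trans ht.1 hs.1, hs.2⟩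
      simp only [hgdef, hKceq s hs']
    rw [hK' t ht]
    show f t = D * Real.exp (-(∫ s in t..T, 2 * (β + γN * K s)))
    rw [hft, hfT, hGsub, hint]
  -- dichotomy
  have hdiff : DifferentiableOn ℝ K (interior (Icc (0:ℝ) T)) := by
    intro x hx
    rw [interior_Icc] at hx
    exact ((hK x (Ioo_subset_Icc_self hx)).differentiableAt).differentiableWithinAt
  have hcase : (MonotoneOn K (Icc (0:ℝ) T) ∧ K 0 ≤ c) ∨
      (AntitoneOn K (Icc (0:ℝ) T) ∧ c ≤ K 0) := by
    rcases le_total 0 D with hD0 | hD0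
    · left
      have hmono : MonotoneOn K (Icc (0 : ℝ) T) := by
        apply monotoneOn_of_deriv_nonneg (convex_Icc 0 T) hKcont hdiff
        intro x hx
        rw [interior_Icc] at hx
        rw [(hK x (Ioo_subset_Icc_self hx)).deriv, hmain x (Ioo_subset_Icc_self hx)]
        exact mul_nonneg hD0 (Real.exp_pos _).le
      exact ⟨hmono, hKT ▸ hmono h0mem hTmem hT0⟩
    · right
      have hanti : AntitoneOn K (Icc (0 : ℝ) T) := by
        apply antitoneOn_of_deriv_nonpos (convex_Icc 0 T) hKcont hdiff
        intro x hx
        rw [interior_Icc] at hx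
        rw [(hK x (Ioo_subset_Icc_self hx)).deriv, hmain x (Ioo_subset_Icc_self hx)]
        exact mul_nonpos_of_nonpos_of_nonneg hD0 (Real.exp_pos _).le
      exact ⟨hanti, hKT ▸ hanti h0mem hTmem hT0⟩
  refine ⟨hmain, ?_, ?_, ?_, ?_⟩
  · -- D ≥ 0
    intro hD0
    have hnonneg : ∀ t ∈ Icc (0 : ℝ) T, 0 ≤ K' t := by
      intro t ht
      rw [hmain t ht]
      exact mul_nonneg hD0 (Real.exp_pos _).le
    refine ⟨hnonneg, ?_⟩
    apply monotoneOn_of_deriv_nonneg (convex_Icc 0 T) hKcont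
    · intro x hx
      rw [interior_Icc] at hx
      exact ((hK x (Ioo_subset_Icc_self hx)).differentiableAt).differentiableWithinAt
    · intro x hx
      rw [interior_Icc] at hx
      rw [(hK x (Ioo_subset_Icc_self hx)).deriv]
      exact hnonneg x (Ioo_subset_Icc_self hx)
  · -- D ≤ 0
    intro hD0
    have hnonpos : ∀ t ∈ Icc (0 : ℝ) T, K' t ≤ 0 := by
      intro t ht
      rw [hmain t ht]
      exact mul_nonpos_of_nonpos_of_nonneg hD0 (Real.exp_pos _).le
    refine ⟨hnonpos, ?_⟩
    apply antitoneOn_of_deriv_nonpos (convex_Icc 0 T) hKcont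
    · intro x hx
      rw [interior_Icc] at hx
      exact ((hK x (Ioo_subset_Icc_self hx)).differentiableAt).differentiableWithinAt
    · intro x hx
      rw [interior_Icc] at hx
      rw [(hK x (Ioo_subset_Icc_self hx)).deriv]
      exact hnonpos x (Ioo_subset_Icc_self hx)
  · -- IsGreatest
    rcases hcase with ⟨hmono, h0T⟩ | ⟨hanti, hcT⟩
    · rw [max_eq_left h0T]
      exact ⟨⟨T, hTmem, hKT⟩, by
        rintro y ⟨x, hx, rfl⟩
        exact hKT ▸ hmono hx hTmem hx.2⟩
    · rw [max_eq_right hcT]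
      exact ⟨⟨0, h0mem, rfl⟩, by
        rintro y ⟨x, hx, rfl⟩
        exact hanti h0mem hx hx.1⟩
  · -- IsLeast
    rcases hcase with ⟨hmono, h0T⟩ | ⟨hanti, hcT⟩
    · rw [min_eq_right h0T]
      exact ⟨⟨0, h0mem, rfl⟩, by
        rintro y ⟨x, hx, rfl⟩
        exact hmono h0mem hx hx.1⟩
    · rw [min_eq_left hcT]
      exact ⟨⟨T, hTmem, hKT⟩, by
        rintro y ⟨x, hx, rfl⟩
        exact hKT ▸ hanti hx hTmem hx.2⟩
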